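/- Let d ≥ 1 and let θ_1, …, θ_d be real numbers with θ_j ∈ (0, π) and θ_j ≠ π/2 for every j, satisfying Σ_{j=1}^d tan(θ_j) = 0. Set N := |{ j : θ_j > π/2 }|. Then 1 ≤ N ≤ d − 1 (in particular d ≥ 2), and (N + 1)·π/2 ≤ Σ_{j=1}^d θ_j ≤ (N + d − 1)·π/2. -/
import Mathlib

open Real Finset

private lemma tan_add_superadd (a b : ℝ) (ha : 0 ≤ a) (hb : 0 ≤ b) (hab : a + b < π/2) :
    Real.tan a + Real.tan b ≤ Real.tan (a + b) := by
  have hpi := Real.pi_pos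
  have hca : 0 < Real.cos a := Real.cos_pos_of_mem_Ioo ⟨by linarith, by linarith⟩
  have hcb : 0 < Real.cos b := Real.cos_pos_of_mem_Ioo ⟨by linarith, by linarith⟩
  have hcab : 0 < Real.cos (a + b) := Real.cos_pos_of_mem_Ioo ⟨by linarith, by linarith⟩
  have hsa : 0 ≤ Real.sin a := Real.sin_nonneg_of_nonneg_of_le_pi ha (by linarith)
  have hsb : 0 ≤ Real.sin b := Real.sin_nonneg_of_nonneg_of_le_pi hb (by linarith)
  have hsab : 0 ≤ Real.sin (a + b) := Real.sin_nonneg_of_nonneg_of_le_pi (by linarith) (by linarith)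
  rw [Real.tan_eq_sin_div_cos, Real.tan_eq_sin_div_cos, Real.tan_eq_sin_div_cos,
    div_add_div _ _ hca.ne' hcb.ne', div_le_div_iff₀ (by positivity) hcab]
  have h1 : Real.sin a * Real.cos b + Real.sin b * Real.cos a = Real.sin (a + b) := by
    rw [Real.sin_add]; ring
  have h2 : Real.cos (a + b) = Real.cos a * Real.cos b - Real.sin a * Real.sin b := Real.cos_add a b
  nlinarith [mul_nonneg hsa hsb, mul_nonneg hsab (mul_nonneg hsa hsb)]

private lemma tan_sum_superadd {ι : Type*} (s : Finset ι) (f : ι → ℝ)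
    (hf : ∀ i ∈ s, 0 ≤ f i) (hs : ∑ i ∈ s, f i < π/2) :
    ∑ i ∈ s, Real.tan (f i) ≤ Real.tan (∑ i ∈ s, f i) := by
  induction s using Finset.cons_induction with
  | empty => simp
  | cons a s has ih =>
    rw [Finset.sum_cons, Finset.sum_cons] at *
    have h0 : 0 ≤ ∑ i ∈ s, f i := Finset.sum_nonneg fun i hi => hf i (Finset.mem_cons_of_mem hi)
    have hfa : 0 ≤ f a := hf a (Finset.mem_cons_self a s)
    have := ih (fun i hi => hf i (Finset.mem_cons_of_mem hi)) (by linarith)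
    have := tan_add_superadd (f a) (∑ i ∈ s, f i) hfa h0 hs
    linarith

private lemma aux_lower (d : ℕ) (hd : 1 ≤ d) (θ : Fin d → ℝ)
    (hθ : ∀ j, θ j ∈ Set.Ioo (0 : ℝ) Real.pi) (hθ' : ∀ j, θ j ≠ Real.pi / 2)
    (hsum : ∑ j, Real.tan (θ j) = 0) :
    1 ≤ (Finset.univ.filter fun j => Real.pi / 2 < θ j).card ∧
    ((((Finset.univ.filter fun j => Real.pi / 2 < θ j).card : ℝ)) + 1) * Real.pi / 2
      ≤ ∑ j, θ j := by
  have hpi := Real.pi_pos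
  set S : Finset (Fin d) := Finset.univ.filter fun j => Real.pi / 2 < θ j with hS
  set T : Finset (Fin d) := Finset.univ.filter fun j => ¬ (Real.pi / 2 < θ j) with hT
  have hTmem : ∀ j ∈ T, θ j < Real.pi / 2 := by
    intro j hj
    rcases lt_or_eq_of_le (le_of_not_gt (Finset.mem_filter.mp hj).2) with h | h
    · exact h
    · exact absurd h (hθ' j)
  have htanT : ∀ j ∈ T, 0 < Real.tan (θ j) := fun j hj =>
    Real.tan_pos_of_pos_of_lt_pi_div_two (hθ j).1 (hTmem j hj)
  have htanS : ∀ j ∈ S, Real.tan (θ j) < 0 := by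
    intro j hj
    have h := (Finset.mem_filter.mp hj).2
    have : Real.tan (Real.pi - (Real.pi - θ j)) = - Real.tan (Real.pi - θ j) :=
      Real.tan_pi_sub _
    rw [sub_sub_cancel] at this
    rw [this]
    have : 0 < Real.tan (Real.pi - θ j) :=
      Real.tan_pos_of_pos_of_lt_pi_div_two (by linarith [(hθ j).2]) (by linarith)
    linarith
  have hsplit : ∀ f : Fin d → ℝ, ∑ j, f j = ∑ j ∈ S, f j + ∑ j ∈ T, f j := by
    intro f
    rw [hS, hT, Finset.sum_filter_add_sum_filter_not]
  -- S nonempty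
  have hSne : S.Nonempty := by
    by_contra h
    rw [Finset.not_nonempty_iff_eq_empty] at h
    have hTuniv : ∀ j, j ∈ T := by
      intro j
      simp only [hT, Finset.mem_filter, Finset.mem_univ, true_and]
      intro hc
      have : j ∈ S := by simp [hS, hc]
      simp [h] at this
    have : 0 < ∑ j, Real.tan (θ j) := by
      apply Finset.sum_pos (fun j _ => htanT j (hTuniv j))
      exact Finset.univ_nonempty_iff.mpr (Fin.pos_iff_nonempty.mp hd)
    linarith
  refine ⟨Finset.card_pos.mpr hSne, ?_⟩
  obtain ⟨s, hs⟩ := hSne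
  have hsθ : Real.pi / 2 < θ s := (Finset.mem_filter.mp hs).2
  -- sum over T of tan ≥ tan (π - θ s)
  have hTtan : Real.tan (Real.pi - θ s) ≤ ∑ j ∈ T, Real.tan (θ j) := by
    have h1 : ∑ j ∈ S, Real.tan (θ j) + ∑ j ∈ T, Real.tan (θ j) = 0 := by
      rw [← hsplit]; exact hsum
    have h2 : ∑ j ∈ S, Real.tan (θ j) ≤ Real.tan (θ s) := by
      have hneg : - Real.tan (θ s) ≤ ∑ j ∈ S, - Real.tan (θ j) :=
        Finset.single_le_sum (fun j hj => le_of_lt (neg_pos.mpr (htanS j hj))) hs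
      rw [Finset.sum_neg_distrib] at hneg
      linarith
    have h3 : Real.tan (Real.pi - θ s) = - Real.tan (θ s) := Real.tan_pi_sub _
    linarith
  -- sum over S of θ ≥ (card - 1) * π/2 + θ s   i.e.
  have hSθ : ((S.card : ℝ) - 1) * (Real.pi / 2) + θ s ≤ ∑ j ∈ S, θ j := by
    have herase : ∑ j ∈ S, θ j = θ s + ∑ j ∈ S.erase s, θ j :=
      (Finset.add_sum_erase S θ hs).symm
    have hcard : (S.erase s).card = S.card - 1 := Finset.card_erase_of_mem hs
    have h4 : ((S.erase s).card : ℝ) * (Real.pi / 2) ≤ ∑ j ∈ S.erase s, θ j := by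
      have := Finset.card_nsmul_le_sum (S.erase s) θ (Real.pi/2)
        (fun j hj => le_of_lt (Finset.mem_filter.mp (Finset.mem_of_mem_erase hj)).2)
      simpa [nsmul_eq_mul] using this
    have hc1 : 1 ≤ S.card := Finset.card_pos.mpr ⟨s, hs⟩
    have hcast : ((S.erase s).card : ℝ) = (S.card : ℝ) - 1 := by
      rw [hcard, Nat.cast_sub hc1, Nat.cast_one]
    rw [hcast] at h4
    linarith
  have hTnn : ∀ j ∈ T, 0 ≤ θ j := fun j _ => le_of_lt (hθ j).1
  have key : Real.pi - θ s ≤ ∑ j ∈ T, θ j ∨ Real.pi / 2 ≤ ∑ j ∈ T, θ j := by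
    by_cases hc : ∑ j ∈ T, θ j < Real.pi / 2
    · left
      by_contra hlt
      push_neg at hlt
      have hsup := tan_sum_superadd T θ hTnn hc
      have hmono : Real.tan (∑ j ∈ T, θ j) < Real.tan (Real.pi - θ s) := by
        apply Real.strictMonoOn_tan
        · exact ⟨by linarith [Finset.sum_nonneg hTnn], hc⟩
        · constructor <;> [linarith [(hθ s).2]; linarith]
        · exact hlt
      linarith
    · right; linarith
  rw [hsplit θ]
  rcases key with h | h
  · have : (Real.pi / 2) < θ s := hsθ
    nlinarith [hSθ]
  · have hScard : ((S.card : ℝ)) * (Real.pi / 2) ≤ ∑ j ∈ S, θ j := by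
      have h4 : (S.card : ℝ) * (Real.pi / 2) ≤ ∑ j ∈ S, θ j := by
        have := Finset.card_nsmul_le_sum S θ (Real.pi/2)
          (fun j hj => le_of_lt (Finset.mem_filter.mp hj).2)
        simpa [nsmul_eq_mul] using this
      exact h4
    nlinarith

/-- Bounds on the spectral position and wavelength capacity of a Neumann-domain star:
if `θ_j ∈ (0,π) \ {π/2}` satisfy `Σ tan θ_j = 0` and `N = |{j : θ_j > π/2}|`, then
`1 ≤ N ≤ d - 1` (so `d ≥ 2`) and `(N+1)π/2 ≤ Σ θ_j ≤ (N + d - 1)π/2`. -/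
theorem stmt_17 (d : ℕ) (hd : 1 ≤ d) (θ : Fin d → ℝ)
    (hθ : ∀ j, θ j ∈ Set.Ioo (0 : ℝ) Real.pi) (hθ' : ∀ j, θ j ≠ Real.pi / 2)
    (hsum : ∑ j, Real.tan (θ j) = 0)
    (N : ℕ) (hN : N = {j : Fin d | Real.pi / 2 < θ j}.ncard) :
    1 ≤ N ∧ N + 1 ≤ d ∧ 2 ≤ d ∧
    ((N : ℝ) + 1) * Real.pi / 2 ≤ ∑ j, θ j ∧
    (∑ j, θ j) ≤ ((N : ℝ) + (d : ℝ) - 1) * Real.pi / 2 := by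
  have hpi := Real.pi_pos
  have hNcard : N = (Finset.univ.filter fun j => Real.pi / 2 < θ j).card := by
    rw [hN]
    have : {j : Fin d | Real.pi / 2 < θ j}
        = ↑(Finset.univ.filter fun j => Real.pi / 2 < θ j) := by
      ext j; simp
    rw [this, Set.ncard_coe_finset]
  obtain ⟨h1, h2⟩ := aux_lower d hd θ hθ hθ' hsum
  -- apply to π - θ
  set θ' : Fin d → ℝ := fun j => Real.pi - θ j with hθ'def
  have hθ1 : ∀ j, θ' j ∈ Set.Ioo (0 : ℝ) Real.pi := by
    intro j
    simp only [hθ'def, Set.mem_Ioo]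
    exact ⟨by linarith [(hθ j).2], by linarith [(hθ j).1]⟩
  have hθ2 : ∀ j, θ' j ≠ Real.pi / 2 := by
    intro j h
    exact hθ' j (by simp only [hθ'def] at h; linarith)
  have hsum' : ∑ j, Real.tan (θ' j) = 0 := by
    simp only [hθ'def, Real.tan_pi_sub]
    rw [Finset.sum_neg_distrib, hsum, neg_zero]
  obtain ⟨h1', h2'⟩ := aux_lower d hd θ' hθ1 hθ2 hsum'
  -- card relation
  have hccompl : (Finset.univ.filter fun j => Real.pi / 2 < θ' j)
      = (Finset.univ.filter fun j => ¬ (Real.pi / 2 < θ j)) := by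
    apply Finset.filter_congr
    intro j _
    simp only [hθ'def, eq_iff_iff]
    constructor
    · intro h hc; linarith
    · intro h
      rcases lt_or_eq_of_le (le_of_not_gt h) with h' | h'
      · linarith
      · exact absurd h' (hθ' j)
  have hcards : N + (Finset.univ.filter fun j => Real.pi / 2 < θ' j).card = d := by
    rw [hccompl, hNcard]
    rw [Finset.card_filter_add_card_filter_not]
    simp
  have hsum'' : ∑ j, θ' j = (d : ℝ) * Real.pi - ∑ j, θ j := by
    simp only [hθ'def]
    rw [Finset.sum_sub_distrib, Finset.sum_const, Finset.card_univ, Fintype.card_fin,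
      nsmul_eq_mul]
  set c := (Finset.univ.filter fun j => Real.pi / 2 < θ' j).card with hc
  have hcastc : (c : ℝ) = (d : ℝ) - (N : ℝ) := by
    have : (N : ℝ) + (c : ℝ) = (d : ℝ) := by exact_mod_cast congrArg Nat.cast hcards
    linarith
  refine ⟨by omega, by omega, by omega, ?_, ?_⟩
  · rw [hNcard]; exact h2
  · rw [hsum''] at h2'
    rw [hcastc] at h2'
    nlinarith
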